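/- If a graph G has an n-dimensional transitive orientation, then every transitive orientation of G is n-dimensional. That is, if some partial order on the vertex set V whose comparability relation (on distinct vertices) equals the edge relation of G is the intersection of n linear orders on V, then every partial order on V whose comparability relation equals the edge relation of G is the intersection of n linear orders on V. -/

import Mathlib

universe u

/-- A transitive orientation of a graph `G`: a partial order on the vertices whose
comparability relation between distinct vertices coincides with adjacency in `G`. -/
def TransOrientation {V : Type u} (G : SimpleGraph V) (le : V → V → Prop) : Prop :=
  IsPartialOrder V le ∧ ∀ x y : V, x ≠ y → (G.Adj x y ↔ (le x y ∨ le y x))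

/-- A relation is `n`-dimensional if it is the intersection of `n` linear orders. -/
def NDimRel {V : Type u} (n : ℕ) (le : V → V → Prop) : Prop :=
  ∃ L : Fin n → (V → V → Prop), (∀ i, IsLinearOrder V (L i)) ∧
    ∀ x y : V, le x y ↔ ∀ i, L i x y

namespace TMS

open Relation

variable {V : Type u} {G : SimpleGraph V} {P Q : V → V → Prop} {n : ℕ}

theorem mkPar {r : V → V → Prop} (h1 : ∀ a, r a a)
    (h2 : ∀ a b c, r a b → r b c → r a c)
    (h3 : ∀ a b, r a b → r b a → a = b) : IsPartialOrder V r :=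
  { refl := h1, trans := h2, antisymm := h3 }

theorem mkLin {r : V → V → Prop} (h1 : ∀ a, r a a)
    (h2 : ∀ a b c, r a b → r b c → r a c)
    (h3 : ∀ a b, r a b → r b a → a = b)
    (h4 : ∀ a b, r a b ∨ r b a) : IsLinearOrder V r :=
  { refl := h1, trans := h2, antisymm := h3, total := h4 }

/-! ### Basic facts about transitive orientations -/

theorem TO.rfl (h : TransOrientation G P) (x : V) : P x x :=
  h.1.toIsPreorder.toRefl.refl x

theorem TO.trans (h : TransOrientation G P) {x y z : V} (h1 : P x y) (h2 : P y z) : P x z :=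
  h.1.toIsPreorder.toIsTrans.trans x y z h1 h2

theorem TO.antisymm (h : TransOrientation G P) {x y : V} (h1 : P x y) (h2 : P y x) : x = y :=
  h.1.toAntisymm.antisymm x y h1 h2

theorem TO.adj_iff (h : TransOrientation G P) {x y : V} (hxy : x ≠ y) :
    G.Adj x y ↔ (P x y ∨ P y x) := h.2 x y hxy

theorem TO.adj_of (h : TransOrientation G P) {x y : V} (hxy : x ≠ y) (hp : P x y) :
    G.Adj x y := (TO.adj_iff h hxy).2 (Or.inl hp)

theorem TO.swap (h : TransOrientation G P) : TransOrientation G (fun a b => P b a) := by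
  refine ⟨mkPar (fun a => TO.rfl h a) (fun a b c h1 h2 => TO.trans h h2 h1)
    (fun a b h1 h2 => (TO.antisymm h h1 h2).symm), fun x y hxy => ?_⟩
  rw [TO.adj_iff h hxy]; tauto

theorem NDim.swap (h : NDimRel n P) : NDimRel n (fun a b => P b a) := by
  obtain ⟨L, hL, hI⟩ := h
  refine ⟨fun i a b => L i b a, fun i => ?_, fun x y => hI y x⟩
  exact mkLin (fun a => (hL i).refl a) (fun a b c h1 h2 => (hL i).trans _ _ _ h2 h1)
    (fun a b h1 h2 => (hL i).antisymm _ _ h2 h1) (fun a b => (hL i).total b a)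

/-- trivial realizer when `V` is a subsingleton -/
theorem NDim.of_subsingleton (hs : Subsingleton V) (hrefl : ∀ x, Q x x) : NDimRel n Q := by
  refine ⟨fun _ _ _ => True, fun i => ?_, fun x y => ?_⟩
  · exact mkLin (fun _ => trivial) (fun _ _ _ _ _ => trivial)
      (fun a b _ _ => Subsingleton.elim a b) (fun _ _ => Or.inl trivial)
  · have : x = y := Subsingleton.elim x y
    subst this
    simp [hrefl x]

/-! ### Restriction to subtypes -/

theorem TO.restrict (h : TransOrientation G P) (p : V → Prop) :
    TransOrientation (G.comap (Subtype.val : {x // p x} → V)) (fun a b => P a.1 b.1) := by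
  refine ⟨mkPar (fun a => TO.rfl h a.1) (fun a b c h1 h2 => TO.trans h h1 h2)
    (fun a b h1 h2 => Subtype.ext (TO.antisymm h h1 h2)), fun x y hxy => ?_⟩
  exact TO.adj_iff h (fun hv => hxy (Subtype.ext hv))

theorem NDim.restrict (h : NDimRel n P) (p : V → Prop) :
    NDimRel n (fun a b : {x // p x} => P a.1 b.1) := by
  obtain ⟨L, hL, hI⟩ := h
  refine ⟨fun i a b => L i a.1 b.1, fun i => ?_, fun x y => hI x.1 y.1⟩
  exact mkLin (fun a => (hL i).refl a.1) (fun a b c h1 h2 => (hL i).trans _ _ _ h1 h2)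
    (fun a b h1 h2 => Subtype.ext ((hL i).antisymm _ _ h1 h2))
    (fun a b => (hL i).total a.1 b.1)

/-! ### Canonical representatives for a setoid -/

noncomputable def rp (s : Setoid V) (x : V) : V := (Quotient.mk s x).out

theorem rp_rel (s : Setoid V) (x : V) : s.r (rp s x) x := Quotient.mk_out x

theorem rp_eq (s : Setoid V) {x y : V} (h : s.r x y) : rp s x = rp s y := by
  unfold rp
  congr 1
  exact Quotient.sound h

/-! ### The generic gluing lemma -/

theorem glue (hQ : TransOrientation G Q)
    (s : Setoid V)
    (cross : Fin n → V → V → Prop)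
    (cross_const : ∀ (i : Fin n) (a a' b : V), s.r a a' → ¬ s.r a b →
      ((cross i a b ↔ cross i a' b) ∧ (cross i b a ↔ cross i b a')))
    (cross_total : ∀ (i : Fin n) (a b : V), ¬ s.r a b → (cross i a b ∨ cross i b a))
    (cross_antisymm : ∀ (i : Fin n) (a b : V), cross i a b → cross i b a → s.r a b)
    (cross_trans : ∀ (i : Fin n) (a b c : V), cross i a b → cross i b c → cross i a c)
    (cross_inter : ∀ a b : V, ¬ s.r a b → (Q a b ↔ ∀ i, cross i a b))
    (hpart : ∀ x : V, NDimRel n (fun a b : {y // s.r x y} => Q a.1 b.1)) :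
    NDimRel n Q := by
  classical
  have hKex : ∀ x : V, ∃ K : Fin n → V → V → Prop,
      (∀ i a b, s.r x a → s.r x b → (K i a b ∨ K i b a)) ∧
      (∀ i a b, s.r x a → s.r x b → K i a b → K i b a → a = b) ∧
      (∀ i a b c, s.r x a → s.r x b → s.r x c → K i a b → K i b c → K i a c) ∧
      (∀ i a, s.r x a → K i a a) ∧
      (∀ a b, s.r x a → s.r x b → (Q a b ↔ ∀ i, K i a b)) := by
    intro x
    obtain ⟨L, hL, hI⟩ := hpart x
    refine ⟨fun i a b => if h : s.r x a ∧ s.r x b then L i ⟨a, h.1⟩ ⟨b, h.2⟩ else True,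
      ?_, ?_, ?_, ?_, ?_⟩
    · intro i a b ha hb
      simp only [dif_pos (And.intro ha hb), dif_pos (And.intro hb ha)]
      exact (hL i).total ⟨a, ha⟩ ⟨b, hb⟩
    · intro i a b ha hb h1 h2
      rw [dif_pos (And.intro ha hb)] at h1
      rw [dif_pos (And.intro hb ha)] at h2
      exact congrArg Subtype.val ((hL i).antisymm ⟨a, ha⟩ ⟨b, hb⟩ h1 h2)
    · intro i a b c ha hb hc h1 h2
      rw [dif_pos (And.intro ha hb)] at h1
      rw [dif_pos (And.intro hb hc)] at h2
      rw [dif_pos (And.intro ha hc)]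
      exact (hL i).trans ⟨a, ha⟩ ⟨b, hb⟩ ⟨c, hc⟩ h1 h2
    · intro i a ha
      rw [dif_pos (And.intro ha ha)]
      exact (hL i).refl ⟨a, ha⟩
    · intro a b ha hb
      refine Iff.trans (hI ⟨a, ha⟩ ⟨b, hb⟩) (forall_congr' fun i => ?_)
      simp only [dif_pos (And.intro ha hb)]
  choose K Ktot Kanti Ktrans Krefl Kinter using hKex
  have mem1 : ∀ a : V, s.r (rp s a) a := fun a => rp_rel s a
  have mem2 : ∀ {a b : V}, s.r a b → s.r (rp s a) b := fun {a b} h =>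
    s.iseqv.trans (mem1 a) h
  refine ⟨fun i a b => if h : s.r a b then K (rp s a) i a b else cross i a b,
    fun i => ?_, fun a b => ?_⟩
  · refine mkLin ?_ ?_ ?_ ?_
    · intro a
      simp only [dif_pos (s.iseqv.refl a)]
      exact Krefl _ i a (mem1 a)
    · intro a b c h1 h2
      simp only [] at h1 h2 ⊢
      by_cases hab : s.r a b <;> by_cases hbc : s.r b c
      · have hac : s.r a c := s.iseqv.trans hab hbc
        rw [dif_pos hab] at h1
        rw [dif_pos hbc] at h2
        rw [dif_pos hac]
        rw [← rp_eq s hab] at h2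
        exact Ktrans _ i a b c (mem1 a) (mem2 hab) (mem2 hac) h1 h2
      · have hac : ¬ s.r a c := fun h => hbc (s.iseqv.trans (s.iseqv.symm hab) h)
        rw [dif_neg hbc] at h2
        rw [dif_neg hac]
        exact ((cross_const i b a c (s.iseqv.symm hab) hbc).1).mp h2
      · have hac : ¬ s.r a c := fun h => hab (s.iseqv.trans h (s.iseqv.symm hbc))
        rw [dif_neg hab] at h1
        rw [dif_neg hac]
        exact ((cross_const i b c a hbc (fun h => hab (s.iseqv.symm h))).2).mp h1
      · rw [dif_neg hab] at h1
        rw [dif_neg hbc] at h2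
        by_cases hac : s.r a c
        · exfalso
          have h2' : cross i b a := ((cross_const i a c b hac hab).2).mpr h2
          exact hab (cross_antisymm i a b h1 h2')
        · rw [dif_neg hac]
          exact cross_trans i a b c h1 h2
    · intro a b h1 h2
      simp only [] at h1 h2
      by_cases hab : s.r a b
      · rw [dif_pos hab] at h1
        rw [dif_pos (s.iseqv.symm hab)] at h2
        rw [← rp_eq s hab] at h2
        exact Kanti _ i a b (mem1 a) (mem2 hab) h1 h2
      · exfalso
        rw [dif_neg hab] at h1
        rw [dif_neg (fun h => hab (s.iseqv.symm h))] at h2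
        exact hab (cross_antisymm i a b h1 h2)
    · intro a b
      by_cases hab : s.r a b
      · simp only [dif_pos hab, dif_pos (s.iseqv.symm hab), ← rp_eq s hab]
        exact Ktot _ i a b (mem1 a) (mem2 hab)
      · simp only [dif_neg hab, dif_neg (fun h => hab (s.iseqv.symm h))]
        exact cross_total i a b hab
  · by_cases hab : s.r a b
    · refine Iff.trans (Kinter (rp s a) a b (mem1 a) (mem2 hab)) (forall_congr' fun i => ?_)
      simp only [dif_pos hab]
    · refine Iff.trans (cross_inter a b hab) (forall_congr' fun i => ?_)
      simp only [dif_neg hab]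



/-! ### Flipped and agreeing edges, non-adjacency -/

/-- the pair `(x,y)` is an edge oriented `x → y` by `P` but `y → x` by `Q` -/
def flip2 (P Q : V → V → Prop) (x y : V) : Prop := x ≠ y ∧ P x y ∧ Q y x

/-- `x` and `y` are joined by an edge on which `P` and `Q` disagree -/
def flipAdj (P Q : V → V → Prop) (x y : V) : Prop := flip2 P Q x y ∨ flip2 P Q y x

/-- `x` and `y` are distinct and non-adjacent -/
def nonAdj (G : SimpleGraph V) (x y : V) : Prop := x ≠ y ∧ ¬ G.Adj x y

theorem flipAdj_symm {x y : V} (h : flipAdj P Q x y) : flipAdj P Q y x := h.symm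

theorem nonAdj_symm {x y : V} (h : nonAdj G x y) : nonAdj G y x :=
  ⟨h.1.symm, fun ha => h.2 ha.symm⟩

section PairFacts

variable (hP : TransOrientation G P) (hQ : TransOrientation G Q)
include hP hQ

/-- on unflipped pairs, `P` and `Q` agree -/
theorem not_flip_iff {x y : V} (h : ¬ flipAdj P Q x y) : (P x y ↔ Q x y) := by
  by_cases hxy : x = y
  · subst hxy
    simp [TO.rfl hP x, TO.rfl hQ x]
  constructor
  · intro hp
    have hadj : G.Adj x y := TO.adj_of hP hxy hp
    rcases (TO.adj_iff hQ hxy).1 hadj with hq | hq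
    · exact hq
    · exact absurd (Or.inl ⟨hxy, hp, hq⟩) h
  · intro hq
    have hadj : G.Adj x y := TO.adj_of hQ hxy hq
    rcases (TO.adj_iff hP hxy).1 hadj with hp | hp
    · exact hp
    · exact absurd (Or.inr ⟨fun hyx => hxy hyx.symm, hp, hq⟩) h

/-- single-step uniformity for a flipped edge -/
theorem flip_step_unif {x x' y : V} (hf : flip2 P Q x x')
    (h1 : ¬ flipAdj P Q x y) (h2 : ¬ flipAdj P Q x' y) (hyx : y ≠ x) (hyx' : y ≠ x') :
    (Q x y ↔ Q x' y) ∧ (Q y x ↔ Q y x') := by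
  obtain ⟨hne, hpxx', hqx'x⟩ := hf
  have h1' : ¬ flipAdj P Q y x := fun h => h1 h.symm
  have h2' : ¬ flipAdj P Q y x' := fun h => h2 h.symm
  constructor
  · constructor
    · intro hq
      exact TO.trans hQ hqx'x hq
    · intro hq
      have hpx'y : P x' y := (not_flip_iff hP hQ h2).2 hq
      have hpxy : P x y := TO.trans hP hpxx' hpx'y
      exact (not_flip_iff hP hQ h1).1 hpxy
  · constructor
    · intro hq
      have hpyx : P y x := (not_flip_iff hP hQ h1').2 hq
      have hpyx' : P y x' := TO.trans hP hpyx hpxx'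
      exact (not_flip_iff hP hQ h2').1 hpyx'
    · intro hq
      exact TO.trans hQ hq hqx'x

/-- uniformity of `Q` across flip-components -/
theorem flip_unif {x x' : V} (h : Relation.EqvGen (flipAdj P Q) x x') :
    ∀ y, ¬ Relation.EqvGen (flipAdj P Q) x y →
      ((Q x y ↔ Q x' y) ∧ (Q y x ↔ Q y x')) := by
  induction h with
  | rel a b hab =>
    intro y hy
    have hay : ¬ flipAdj P Q a y := fun h => hy (Relation.EqvGen.rel _ _ h)
    have hby : ¬ flipAdj P Q b y := fun h =>
      hy (Relation.EqvGen.trans _ _ _ (Relation.EqvGen.rel _ _ hab) (Relation.EqvGen.rel _ _ h))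
    have hya : y ≠ a := fun h => hy (by rw [h]; exact Relation.EqvGen.refl a)
    have hyb : y ≠ b := fun h => hy (Relation.EqvGen.trans _ _ _
      (Relation.EqvGen.rel _ _ hab) (by rw [h]; exact Relation.EqvGen.refl b))
    rcases hab with hab | hba
    · exact flip_step_unif hP hQ hab hay hby hya hyb
    · have := flip_step_unif hP hQ hba hby hay hyb hya
      exact ⟨this.1.symm, this.2.symm⟩
  | refl a => intro y _; exact ⟨Iff.rfl, Iff.rfl⟩
  | symm a b h ih =>
    intro y hy
    have hay : ¬ Relation.EqvGen (flipAdj P Q) a y := fun h' =>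
      hy (Relation.EqvGen.trans _ _ _ (Relation.EqvGen.symm _ _ h) h')
    have := ih y hay
    exact ⟨this.1.symm, this.2.symm⟩
  | trans a b c hab hbc ih1 ih2 =>
    intro y hy
    have hby : ¬ Relation.EqvGen (flipAdj P Q) b y := fun h' =>
      hy (Relation.EqvGen.trans _ _ _ hab h')
    have t1 := ih1 y hy
    have t2 := ih2 y hby
    exact ⟨t1.1.trans t2.1, t1.2.trans t2.2⟩

/-- across flip components, `P` and `Q` agree -/
theorem flip_cross_agree {x y : V} (h : ¬ Relation.EqvGen (flipAdj P Q) x y) :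
    (P x y ↔ Q x y) :=
  not_flip_iff hP hQ (fun h' => h (Relation.EqvGen.rel _ _ h'))

end PairFacts

section CoFacts

variable (hQ : TransOrientation G Q)
include hQ

/-- single-step uniformity for a non-edge, towards a common neighbour -/
theorem co_step_unif {x x' y : V} (hn : nonAdj G x x')
    (h1 : ¬ nonAdj G x y) (h2 : ¬ nonAdj G x' y) (hxy : x ≠ y) (hx'y : x' ≠ y) :
    (Q x y ↔ Q x' y) ∧ (Q y x ↔ Q y x') := by
  have hadj1 : G.Adj x y := by
    by_contra hc; exact h1 ⟨hxy, hc⟩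
  have hadj2 : G.Adj x' y := by
    by_contra hc; exact h2 ⟨hx'y, hc⟩
  have key : ∀ u u' : V, nonAdj G u u' → G.Adj u y → G.Adj u' y → Q u y → Q u' y := by
    intro u u' hu hadju hadju' hq
    rcases (TO.adj_iff hQ (SimpleGraph.Adj.ne hadju')).1 hadju' with h' | h'
    · exact h'
    · exfalso
      have : Q u u' := TO.trans hQ hq h'
      have hne : u ≠ u' := hu.1
      exact hu.2 (TO.adj_of hQ hne this)
  have key2 : ∀ u u' : V, nonAdj G u u' → G.Adj u y → G.Adj u' y → Q y u → Q y u' := by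
    intro u u' hu hadju hadju' hq
    rcases (TO.adj_iff hQ (SimpleGraph.Adj.ne hadju')).1 hadju' with h' | h'
    · exfalso
      have : Q u' u := TO.trans hQ h' hq
      exact hu.2 (TO.adj_of hQ (fun h => hu.1 h.symm) this).symm
    · exact h'
  exact ⟨⟨key x x' hn hadj1 hadj2, key x' x (nonAdj_symm hn) hadj2 hadj1⟩,
    ⟨key2 x x' hn hadj1 hadj2, key2 x' x (nonAdj_symm hn) hadj2 hadj1⟩⟩

/-- uniformity of `Q` across co-components -/
theorem co_unif {x x' : V} (h : Relation.EqvGen (nonAdj G) x x') :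
    ∀ y, ¬ Relation.EqvGen (nonAdj G) x y →
      ((Q x y ↔ Q x' y) ∧ (Q y x ↔ Q y x')) := by
  induction h with
  | rel a b hab =>
    intro y hy
    have hay : ¬ nonAdj G a y := fun h => hy (Relation.EqvGen.rel _ _ h)
    have hby : ¬ nonAdj G b y := fun h =>
      hy (Relation.EqvGen.trans _ _ _ (Relation.EqvGen.rel _ _ hab) (Relation.EqvGen.rel _ _ h))
    have h1 : a ≠ y := fun h => hy (h ▸ Relation.EqvGen.refl a)
    have h2 : b ≠ y := fun h => by
      apply hy
      exact Relation.EqvGen.trans _ _ _ (Relation.EqvGen.rel _ _ hab) (h ▸ Relation.EqvGen.refl b)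
    exact co_step_unif hQ hab hay hby h1 h2
  | refl a => intro y _; exact ⟨Iff.rfl, Iff.rfl⟩
  | symm a b h ih =>
    intro y hy
    have hay : ¬ Relation.EqvGen (nonAdj G) a y := fun h' =>
      hy (Relation.EqvGen.trans _ _ _ (Relation.EqvGen.symm _ _ h) h')
    have := ih y hay
    exact ⟨this.1.symm, this.2.symm⟩
  | trans a b c hab hbc ih1 ih2 =>
    intro y hy
    have hby : ¬ Relation.EqvGen (nonAdj G) b y := fun h' =>
      hy (Relation.EqvGen.trans _ _ _ hab h')
    have t1 := ih1 y hy
    have t2 := ih2 y hby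
    exact ⟨t1.1.trans t2.1, t1.2.trans t2.2⟩

theorem co_cross_comp {x y : V} (hxy : ¬ Relation.EqvGen (nonAdj G) x y) :
    Q x y ∨ Q y x := by
  have hne : x ≠ y := fun h => hxy (h ▸ Relation.EqvGen.refl x)
  have hadj : G.Adj x y := by
    by_contra hc
    exact hxy (Relation.EqvGen.rel _ _ ⟨hne, hc⟩)
  exact (TO.adj_iff hQ hne).1 hadj

end CoFacts

/-- crossing lemma for equivalence closures -/
theorem eqvgen_cross {r : V → V → Prop} (hsym : ∀ a b, r a b → r b a)
    {x y : V} (h : Relation.EqvGen r x y) (S : Set V) :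
    (x ∈ S → y ∉ S → ∃ u v, r u v ∧ u ∈ S ∧ v ∉ S) ∧
    (y ∈ S → x ∉ S → ∃ u v, r u v ∧ u ∈ S ∧ v ∉ S) := by
  induction h with
  | rel a b hab =>
    exact ⟨fun ha hb => ⟨a, b, hab, ha, hb⟩, fun hb ha => ⟨b, a, hsym a b hab, hb, ha⟩⟩
  | refl a => exact ⟨fun h h' => absurd h h', fun h h' => absurd h h'⟩
  | symm a b h ih => exact ⟨ih.2, ih.1⟩
  | trans a b c hab hbc ih1 ih2 =>
    constructor
    · intro ha hc
      by_cases hb : b ∈ S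
      · exact ih2.1 hb hc
      · exact ih1.1 ha hb
    · intro hc ha
      by_cases hb : b ∈ S
      · exact ih1.2 hb ha
      · exact ih2.2 hc hb

/-! ### The two gluing wrappers -/

/-- gluing along flip-components -/
theorem glue_flip (hP : TransOrientation G P) (hQ : TransOrientation G Q)
    (hdim : NDimRel n P)
    (hpart : ∀ x : V, NDimRel n
      (fun a b : {y // Relation.EqvGen (flipAdj P Q) x y} => Q a.1 b.1)) :
    NDimRel n Q := by
  classical
  set e := Relation.EqvGen (flipAdj P Q) with he
  have heqv : Equivalence e := Relation.EqvGen.is_equivalence _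
  set s : Setoid V := ⟨e, heqv⟩ with hs
  obtain ⟨L, hL, hI⟩ := hdim
  have mem1 : ∀ a : V, e (rp s a) a := fun a => rp_rel s a
  have conj : ∀ {a b : V}, ¬ e a b → ¬ e (rp s a) (rp s b) := by
    intro a b hab hc
    exact hab (heqv.trans (heqv.symm (mem1 a)) (heqv.trans hc (mem1 b)))
  refine glue hQ s (fun i a b => L i (rp s a) (rp s b)) ?_ ?_ ?_ ?_ ?_ hpart
  · intro i a a' b haa' hab
    refine ⟨?_, ?_⟩ <;> simp [rp_eq s haa']
  · intro i a b _
    exact (hL i).total _ _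
  · intro i a b hab hba
    have : rp s a = rp s b := (hL i).antisymm _ _ hab hba
    exact heqv.trans (heqv.symm (mem1 a)) (this ▸ mem1 b)
  · intro i a b c h1 h2
    exact (hL i).trans _ _ _ h1 h2
  · intro a b hab
    have step1 : Q a b ↔ Q (rp s a) b :=
      (flip_unif hP hQ (heqv.symm (mem1 a)) b hab).1
    have hba : ¬ e b (rp s a) := fun h =>
      hab (heqv.trans (heqv.symm (mem1 a)) (heqv.symm h))
    have step2 : Q (rp s a) b ↔ Q (rp s a) (rp s b) :=
      (flip_unif hP hQ (heqv.symm (mem1 b)) (rp s a) hba).2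
    have step3 : Q (rp s a) (rp s b) ↔ P (rp s a) (rp s b) :=
      (flip_cross_agree hP hQ (conj hab)).symm
    rw [step1, step2, step3]
    exact hI _ _

/-- gluing along co-components (ordinal sum) -/
theorem glue_co (hQ : TransOrientation G Q) (hn : n ≠ 0)
    (hpart : ∀ x : V, NDimRel n
      (fun a b : {y // Relation.EqvGen (nonAdj G) x y} => Q a.1 b.1)) :
    NDimRel n Q := by
  classical
  set e := Relation.EqvGen (nonAdj G) with he
  have heqv : Equivalence e := Relation.EqvGen.is_equivalence _
  set s : Setoid V := ⟨e, heqv⟩ with hs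
  refine glue hQ s (fun _ a b => Q a b) ?_ ?_ ?_ ?_ ?_ hpart
  · intro i a a' b haa' hab
    have t1 := co_unif hQ (x := a) (x' := a') haa' b hab
    exact ⟨t1.1, t1.2⟩
  · intro i a b hab
    exact co_cross_comp hQ hab
  · intro i a b h1 h2
    have : a = b := TO.antisymm hQ h1 h2
    exact this ▸ heqv.refl a
  · intro i a b c h1 h2
    exact TO.trans hQ h1 h2
  · intro a b _
    exact ⟨fun h _ => h, fun h => h ⟨0, Nat.pos_of_ne_zero hn⟩⟩

/-- nonzero dimension forces `V` to be a subsingleton when `n = 0` -/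
theorem subsingleton_of_ndim_zero (hP : TransOrientation G P) (h : NDimRel 0 P) :
    Subsingleton V := by
  obtain ⟨L, _, hI⟩ := h
  refine ⟨fun x y => ?_⟩
  have h1 : P x y := (hI x y).2 (fun i => absurd i.2 (by simp))
  have h2 : P y x := (hI y x).2 (fun i => absurd i.2 (by simp))
  exact TO.antisymm hP h1 h2



/-! ### Implication classes (Γ-steps between `P`-oriented edges) -/

/-- a `P`-oriented edge -/
def Ppair (P : V → V → Prop) (e : V × V) : Prop := e.1 ≠ e.2 ∧ P e.1 e.2

/-- the Γ-step relation between `P`-oriented edges: shared source with nonadjacent targets,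
or shared target with nonadjacent sources -/
def gstep (G : SimpleGraph V) (P : V → V → Prop) (e f : V × V) : Prop :=
  Ppair P e ∧ Ppair P f ∧
    ((e.1 = f.1 ∧ e.2 ≠ f.2 ∧ ¬ G.Adj e.2 f.2) ∨ (e.2 = f.2 ∧ e.1 ≠ f.1 ∧ ¬ G.Adj e.1 f.1))

/-- the implication class of `e₀` -/
def cls (G : SimpleGraph V) (P : V → V → Prop) (e₀ f : V × V) : Prop :=
  Relation.EqvGen (gstep G P) e₀ f

/-- the vertex set of the implication class of `e₀` -/
def VK (G : SimpleGraph V) (P : V → V → Prop) (e₀ : V × V) : Set V :=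
  {v | ∃ f, cls G P e₀ f ∧ (v = f.1 ∨ v = f.2)}

/-- the flipped `P`-pairs -/
def flipP (P Q : V → V → Prop) (f : V × V) : Prop := flip2 P Q f.1 f.2

/-- adjacency via an edge of the class of `e₀` -/
def kadj (G : SimpleGraph V) (P : V → V → Prop) (e₀ : V × V) (u v : V) : Prop :=
  ∃ f, cls G P e₀ f ∧ ((u = f.1 ∧ v = f.2) ∨ (u = f.2 ∧ v = f.1))

/-- a module of the graph `G` -/
def Mod (G : SimpleGraph V) (S : Set V) : Prop :=
  ∀ z, z ∉ S → ∀ u v, u ∈ S → v ∈ S → (G.Adj z u ↔ G.Adj z v)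

theorem gstep_symm {e f : V × V} (h : gstep G P e f) : gstep G P f e := by
  obtain ⟨h1, h2, h3⟩ := h
  refine ⟨h2, h1, ?_⟩
  rcases h3 with ⟨a, b, c⟩ | ⟨a, b, c⟩
  · exact Or.inl ⟨a.symm, b.symm, fun h => c (h.symm)⟩
  · exact Or.inr ⟨a.symm, b.symm, fun h => c (h.symm)⟩

theorem cls_symm_mem {e₀ f g : V × V} (h1 : cls G P e₀ f) (h2 : cls G P e₀ g) :
    Relation.EqvGen (gstep G P) f g :=
  Relation.EqvGen.trans _ _ _ (Relation.EqvGen.symm _ _ h1) h2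

theorem mem_VK_left {e₀ f : V × V} (h : cls G P e₀ f) : f.1 ∈ VK G P e₀ :=
  ⟨f, h, Or.inl rfl⟩

theorem mem_VK_right {e₀ f : V × V} (h : cls G P e₀ f) : f.2 ∈ VK G P e₀ :=
  ⟨f, h, Or.inr rfl⟩

theorem cls_ppair {e₀ f : V × V} (h : cls G P e₀ f) (hp0 : Ppair P e₀) : Ppair P f := by
  have main : ∀ e g : V × V, Relation.EqvGen (gstep G P) e g →
      (e = g ∨ (Ppair P e ∧ Ppair P g)) := by
    intro e g h
    induction h with
    | rel a b hab => exact Or.inr ⟨hab.1, hab.2.1⟩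
    | refl a => exact Or.inl rfl
    | symm a b h ih => rcases ih with h' | h' ; exacts [Or.inl h'.symm, Or.inr ⟨h'.2, h'.1⟩]
    | trans a b c hab hbc ih1 ih2 =>
      rcases ih1 with h1 | h1
      · exact h1 ▸ ih2
      · rcases ih2 with h2 | h2
        · exact Or.inr (h2 ▸ h1)
        · exact Or.inr ⟨h1.1, h2.2⟩
  rcases main e₀ f h with h' | h'
  · exact h' ▸ hp0
  · exact h'.2

section ClassFacts

variable (hP : TransOrientation G P) (hQ : TransOrientation G Q)

include hP hQ in
/-- Γ-steps preserve flippedness (in the aligned orientation) -/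
theorem gstep_flip {e f : V × V} (h : gstep G P e f) (hf : flipP P Q e) : flipP P Q f := by
  obtain ⟨⟨hne, hpe⟩, ⟨hnf, hpf⟩, hsh⟩ := h
  obtain ⟨-, -, hqe⟩ := hf
  refine ⟨hnf, hpf, ?_⟩
  rcases hsh with ⟨h1, h2, h3⟩ | ⟨h1, h2, h3⟩
  · rcases (TO.adj_iff hQ hnf).1 (TO.adj_of hP hnf hpf) with hq | hq
    · exfalso
      have : Q e.2 f.2 := TO.trans hQ hqe (h1 ▸ hq)
      exact h3 (TO.adj_of hQ h2 this)
    · exact hq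
  · rcases (TO.adj_iff hQ hnf).1 (TO.adj_of hP hnf hpf) with hq | hq
    · exfalso
      have : Q f.1 e.1 := TO.trans hQ (h1 ▸ hq) hqe
      exact h3 (TO.adj_of hQ (fun h => h2 h.symm) this).symm
    · exact hq

include hP hQ in
/-- all members of the class of a flipped pair are flipped -/
theorem cls_flip {e₀ f : V × V} (h : cls G P e₀ f) (hf : flipP P Q e₀) : flipP P Q f := by
  have main : ∀ e g : V × V, Relation.EqvGen (gstep G P) e g →
      ((flipP P Q e → flipP P Q g) ∧ (flipP P Q g → flipP P Q e)) := by
    intro e g h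
    induction h with
    | rel a b hab =>
      exact ⟨gstep_flip hP hQ hab, gstep_flip hP hQ (gstep_symm hab)⟩
    | refl a => exact ⟨id, id⟩
    | symm a b h ih => exact ⟨ih.2, ih.1⟩
    | trans a b c hab hbc ih1 ih2 => exact ⟨fun h => ih2.1 (ih1.1 h), fun h => ih1.2 (ih2.2 h)⟩
  exact (main e₀ f h).1 hf

include hP in
omit hQ in
/-- per-edge module property of `VK` -/
theorem VK_edge_unif {e₀ f : V × V} (hp0 : Ppair P e₀) (hcl : cls G P e₀ f) {z : V}
    (hz : z ∉ VK G P e₀) : (G.Adj z f.1 ↔ G.Adj z f.2) := by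
  obtain ⟨hne, hpe⟩ := cls_ppair hcl hp0
  have hza : z ≠ f.1 := fun h => hz (h ▸ mem_VK_left hcl)
  have hzb : z ≠ f.2 := fun h => hz (h ▸ mem_VK_right hcl)
  constructor
  · intro hadj
    rcases (TO.adj_iff hP hza).1 hadj with hp | hp
    · exact TO.adj_of hP hzb (TO.trans hP hp hpe)
    · by_contra hnb
      refine hz ⟨(f.1, z), Relation.EqvGen.trans _ _ _ hcl (Relation.EqvGen.rel _ _ ?_),
        Or.inr rfl⟩
      exact ⟨⟨hne, hpe⟩, ⟨fun h => hza h.symm, hp⟩,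
        Or.inl ⟨rfl, hzb.symm, fun h => hnb h.symm⟩⟩
  · intro hadj
    rcases (TO.adj_iff hP hzb).1 hadj with hp | hp
    · by_contra hna
      refine hz ⟨(z, f.2), Relation.EqvGen.trans _ _ _ hcl (Relation.EqvGen.rel _ _ ?_),
        Or.inl rfl⟩
      exact ⟨⟨hne, hpe⟩, ⟨hzb, hp⟩, Or.inr ⟨rfl, fun h => hza h.symm, fun h => hna h.symm⟩⟩
    · exact (TO.adj_of hP (fun h => hza h.symm) (TO.trans hP hpe hp)).symm

omit hP hQ in
/-- connectivity of the vertex set of a class -/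
theorem cls_conn {e₀ : V × V} :
    ∀ e f : V × V, Relation.EqvGen (gstep G P) e f → cls G P e₀ e →
      ∀ u v, (u = e.1 ∨ u = e.2) → (v = f.1 ∨ v = f.2) →
        Relation.EqvGen (kadj G P e₀) u v := by
  have within : ∀ g : V × V, cls G P e₀ g → ∀ u v, (u = g.1 ∨ u = g.2) → (v = g.1 ∨ v = g.2) →
      Relation.EqvGen (kadj G P e₀) u v := by
    intro g hg u v hu hv
    rcases hu with hu | hu <;> rcases hv with hv | hv
    · rw [hu, hv]; exact Relation.EqvGen.refl _
    · exact Relation.EqvGen.rel _ _ ⟨g, hg, Or.inl ⟨hu, hv⟩⟩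
    · exact Relation.EqvGen.rel _ _ ⟨g, hg, Or.inr ⟨hu, hv⟩⟩
    · rw [hu, hv]; exact Relation.EqvGen.refl _
  intro e f h
  induction h with
  | rel a b hab =>
    intro hcl u v hu hv
    have hclb : cls G P e₀ b := Relation.EqvGen.trans _ _ _ hcl (Relation.EqvGen.rel _ _ hab)
    rcases hab.2.2 with ⟨h1, _, _⟩ | ⟨h1, _, _⟩
    · exact Relation.EqvGen.trans _ _ _ (within a hcl u a.1 hu (Or.inl rfl))
        (within b hclb a.1 v (Or.inl h1) hv)
    · exact Relation.EqvGen.trans _ _ _ (within a hcl u a.2 hu (Or.inr rfl))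
        (within b hclb a.2 v (Or.inr h1) hv)
  | refl a =>
    intro hcl u v hu hv
    exact within a hcl u v hu hv
  | symm a b h ih =>
    intro hclb u v hu hv
    have hcla : cls G P e₀ a := Relation.EqvGen.trans _ _ _ hclb (Relation.EqvGen.symm _ _ h)
    exact Relation.EqvGen.symm _ _ (ih hcla v u hv hu)
  | trans a b c hab hbc ih1 ih2 =>
    intro hcla u v hu hv
    have hclb : cls G P e₀ b := Relation.EqvGen.trans _ _ _ hcla hab
    exact Relation.EqvGen.trans _ _ _ (ih1 hcla u b.1 hu (Or.inl rfl))
      (ih2 hclb b.1 v (Or.inl rfl) hv)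

include hP in
omit hQ in
/-- the vertex set of a class is a module -/
theorem VK_module {e₀ : V × V} (hp0 : Ppair P e₀) : Mod G (VK G P e₀) := by
  intro z hz u v hu hv
  obtain ⟨fu, hfu, huend⟩ := hu
  obtain ⟨fv, hfv, hvend⟩ := hv
  have hreach : Relation.EqvGen (kadj G P e₀) u v :=
    cls_conn fu fv (cls_symm_mem hfu hfv) hfu u v huend hvend
  clear hfu hfv huend hvend
  induction hreach with
  | rel a b hab =>
    obtain ⟨f, hf, hend⟩ := hab
    have := VK_edge_unif hP hp0 hf hz
    rcases hend with ⟨h1, h2⟩ | ⟨h1, h2⟩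
    · rw [h1, h2]; exact this
    · rw [h1, h2]; exact this.symm
  | refl a => exact Iff.rfl
  | symm a b h ih => exact ih.symm
  | trans a b c hab hbc ih1 ih2 => exact ih1.trans ih2

end ClassFacts



/-! ### Maximal and minimal elements -/

theorem exists_P_max [Finite V] (hP : TransOrientation G P) [hne : Nonempty V] :
    ∃ m : V, ∀ x, P m x → x = m := by
  letI : PartialOrder V :=
    { le := P, le_refl := TO.rfl hP, le_trans := fun a b c => TO.trans hP,
      le_antisymm := fun a b => TO.antisymm hP }
  obtain ⟨m, -, hm⟩ := Set.Finite.exists_maximalFor (id : V → V) Set.univ Set.finite_univ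
    Set.univ_nonempty
  exact ⟨m, fun x hx => le_antisymm (hm (Set.mem_univ x) hx) hx⟩

theorem exists_P_min [Finite V] (hP : TransOrientation G P) [hne : Nonempty V] :
    ∃ m : V, ∀ x, P x m → x = m := by
  letI : PartialOrder V :=
    { le := fun a b => P b a, le_refl := fun a => TO.rfl hP a,
      le_trans := fun a b c h1 h2 => TO.trans hP h2 h1,
      le_antisymm := fun a b h1 h2 => TO.antisymm hP h2 h1 }
  obtain ⟨m, -, hm⟩ := Set.Finite.exists_maximalFor (id : V → V) Set.univ Set.finite_univ
    Set.univ_nonempty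
  exact ⟨m, fun x hx => le_antisymm (hm (Set.mem_univ x) hx) hx⟩

/-! ### The chain-of-modules argument -/

theorem mod_union {M A : Set V} (hM : Mod G M) (hA : Mod G A) {x : V}
    (hx1 : x ∈ M) (hx2 : x ∈ A) : Mod G (M ∪ A) := by
  intro z hz u v hu hv
  have hzM : z ∉ M := fun h => hz (Or.inl h)
  have hzA : z ∉ A := fun h => hz (Or.inr h)
  have key : ∀ w, w ∈ M ∪ A → (G.Adj z w ↔ G.Adj z x) := by
    intro w hw
    rcases hw with hw | hw
    · exact hM z hzM w x hw hx1
    · exact hA z hzA w x hw hx2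
  exact (key u hu).trans (key v hv).symm

theorem kadj_symm {e₀ : V × V} (u v : V) (h : kadj G P e₀ u v) : kadj G P e₀ v u := by
  obtain ⟨f, hf, h⟩ := h
  rcases h with ⟨h1, h2⟩ | ⟨h1, h2⟩
  · exact ⟨f, hf, Or.inr ⟨h2, h1⟩⟩
  · exact ⟨f, hf, Or.inl ⟨h2, h1⟩⟩

theorem flipAdj_symm' (x y : V) (h : flipAdj P Q x y) : flipAdj P Q y x := h.symm

theorem nonAdj_symm' (x y : V) (h : nonAdj G x y) : nonAdj G y x := nonAdj_symm h

section LemmaK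

variable [Finite V] (hP : TransOrientation G P) (hQ : TransOrientation G Q)
  (hFconn : ∀ x y : V, Relation.EqvGen (flipAdj P Q) x y)
  (hCo : ∀ x y : V, Relation.EqvGen (nonAdj G) x y)

include hP hQ hFconn hCo in
theorem chain_induction
    (H : ∀ e : V × V, flipP P Q e → VK G P e ≠ Set.univ) :
    ∀ (k : ℕ) (M : Set V), Mod G M → M.Nonempty → M ≠ Set.univ → Set.ncard Mᶜ ≤ k → False := by
  intro k
  induction k with
  | zero =>
    intro M _ _ hMu hcard
    have h0 : Set.ncard Mᶜ = 0 := Nat.le_zero.1 hcard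
    have : Mᶜ = ∅ := (Set.ncard_eq_zero (Set.toFinite _)).1 h0
    exact hMu (by rw [← Set.compl_empty, ← this, compl_compl])
  | succ k ih =>
    intro M hM hMne hMu hcard
    obtain ⟨m, hm⟩ := hMne
    obtain ⟨w, hw⟩ := Set.ne_univ_iff_exists_notMem M |>.1 hMu
    obtain ⟨x, y, hxy, hxM, hyM⟩ := (eqvgen_cross flipAdj_symm' (hFconn m w) M).1 hm hw
    -- orient the flipped pair
    obtain ⟨e₁, hfe₁, hx1, hy1⟩ : ∃ e₁ : V × V, flipP P Q e₁ ∧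
        (x = e₁.1 ∨ x = e₁.2) ∧ (y = e₁.1 ∨ y = e₁.2) := by
      rcases hxy with h | h
      · exact ⟨(x, y), h, Or.inl rfl, Or.inr rfl⟩
      · exact ⟨(y, x), h, Or.inr rfl, Or.inl rfl⟩
    have hp1 : Ppair P e₁ := ⟨hfe₁.1, hfe₁.2.1⟩
    set A := VK G P e₁ with hA
    have hclrefl : cls G P e₁ e₁ := Relation.EqvGen.refl _
    have hxA : x ∈ A := by
      rcases hx1 with h | h
      · exact h ▸ mem_VK_left hclrefl
      · exact h ▸ mem_VK_right hclrefl
    have hyA : y ∈ A := by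
      rcases hy1 with h | h
      · exact h ▸ mem_VK_left hclrefl
      · exact h ▸ mem_VK_right hclrefl
    have hModA : Mod G A := VK_module hP hp1
    by_cases hMA : M ∪ A = Set.univ
    · -- final analysis
      by_cases hX : (M \ A).Nonempty
      · obtain ⟨x', hx'⟩ := hX
        -- the epsilon link
        have elink : ∀ w' ∈ M \ A, ∀ z ∈ A \ M, (G.Adj w' x ↔ G.Adj z x) := by
          intro w' hw' z hz
          have h1 : G.Adj w' x ↔ G.Adj w' z := hModA w' hw'.2 x z hxA hz.1
          have h2 : G.Adj z w' ↔ G.Adj z x := hM z hz.2 w' x hw'.1 hxM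
          rw [h1, G.adj_comm w' z, h2]
        have hyZ : y ∈ A \ M := ⟨hyA, hyM⟩
        by_cases hε : G.Adj x' x
        · -- complete between pieces : contradict co-connectivity
          have hadjall : ∀ w' ∈ M \ A, ∀ t, t ∉ M \ A → t ∈ A → G.Adj w' t := by
            intro w' hw' t _ htA
            have h1 : G.Adj w' x := by
              rw [elink w' hw' y hyZ, ← elink x' hx' y hyZ]
              exact hε
            rw [hModA w' hw'.2 t x htA hxA]
            exact h1
          have hxnX : x ∉ M \ A := fun h => h.2 hxA
          obtain ⟨u, v, huv, huX, hvX⟩ :=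
            (eqvgen_cross nonAdj_symm' (hCo x' x) (M \ A)).1 hx' hxnX
          -- v ∈ univ = M ∪ A; in both cases v is adjacent to u
          have hvMA : v ∈ M ∪ A := hMA ▸ Set.mem_univ v
          have : G.Adj u v := by
            rcases hvMA with hvM | hvA
            · have hvA : v ∈ A := by
                by_contra hvA
                exact hvX ⟨hvM, hvA⟩
              exact hadjall u huX v hvX hvA
            · exact hadjall u huX v hvX hvA
          exact huv.2 this
        · -- no edges between Y and Z : contradict class connectivity
          have noYZ : ∀ z ∈ A \ M, ∀ t ∈ M ∩ A, ¬ G.Adj z t := by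
            intro z hz t ht hadj
            have h1 : G.Adj z t ↔ G.Adj z x := hM z hz.2 t x ht.1 hxM
            have h2 : G.Adj z x ↔ G.Adj x' x := (elink x' hx' z hz).symm
            rw [h1, h2] at hadj
            exact hε hadj
          have hreach : Relation.EqvGen (kadj G P e₁) x y :=
            cls_conn e₁ e₁ (Relation.EqvGen.refl _) hclrefl x y
              (by rcases hx1 with h | h; exacts [Or.inl h, Or.inr h])
              (by rcases hy1 with h | h; exacts [Or.inl h, Or.inr h])
          have hxY : x ∈ M ∩ A := ⟨hxM, hxA⟩
          have hynY : y ∉ M ∩ A := fun h => hyM h.1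
          obtain ⟨u, v, huv, huY, hvY⟩ :=
            (eqvgen_cross (kadj_symm) hreach (M ∩ A)).1 hxY hynY
          obtain ⟨f, hf, hend⟩ := huv
          have hppf : Ppair P f := cls_ppair hf hp1
          have hvA : v ∈ A := by
            rcases hend with ⟨h1, h2⟩ | ⟨h1, h2⟩
            · exact h2 ▸ mem_VK_right hf
            · exact h2 ▸ mem_VK_left hf
          have hvM : v ∉ M := fun h => hvY ⟨h, hvA⟩
          have hadjuv : G.Adj u v := by
            rcases hend with ⟨h1, h2⟩ | ⟨h1, h2⟩
            · rw [h1, h2]; exact TO.adj_of hP hppf.1 hppf.2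
            · rw [h1, h2]; exact (TO.adj_of hP hppf.1 hppf.2).symm
          exact noYZ v ⟨hvA, hvM⟩ u huY hadjuv.symm
      · -- M ⊆ A, so A = univ, contradicting H
        have hMsub : M ⊆ A := by
          rw [Set.not_nonempty_iff_eq_empty, Set.diff_eq_empty] at hX
          exact hX
        refine H e₁ hfe₁ ?_
        rw [← hMA]
        exact (Set.union_eq_self_of_subset_left hMsub).symm
    · -- grow the module
      have hModU : Mod G (M ∪ A) := mod_union hM hModA hxM hxA
      have hlt : Set.ncard (M ∪ A)ᶜ < Set.ncard Mᶜ := by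
        refine Set.ncard_lt_ncard ?_ (Set.toFinite _)
        constructor
        · exact Set.compl_subset_compl.2 Set.subset_union_left
        · intro hsub
          have : y ∈ (M ∪ A)ᶜ := hsub hyM
          exact this (Or.inr hyA)
      exact ih (M ∪ A) hModU ⟨x, Or.inl hxM⟩ hMA (by omega)

include hP hQ hFconn hCo in
theorem exists_spanning (hex : ∃ x y : V, flip2 P Q x y) :
    ∃ e : V × V, flipP P Q e ∧ VK G P e = Set.univ := by
  by_contra hcon
  push_neg at hcon
  have H : ∀ e : V × V, flipP P Q e → VK G P e ≠ Set.univ := fun e he => hcon e he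
  obtain ⟨x, y, hxy⟩ := hex
  have hfl : flipP P Q (x, y) := hxy
  refine chain_induction hP hQ hFconn hCo H (Set.ncard (VK G P (x, y))ᶜ) (VK G P (x, y))
    (VK_module hP ⟨hxy.1, hxy.2.1⟩) ?_ (H _ hfl) le_rfl
  exact ⟨x, mem_VK_left (Relation.EqvGen.refl _)⟩

end LemmaK



/-! ### Upper/Lower companions and the core contradiction -/

/-- an agreeing edge -/
def agree2 (P Q : V → V → Prop) (x y : V) : Prop := x ≠ y ∧ P x y ∧ Q x y

/-- the pair `f` has a common neighbour above both ends in both orders -/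
def Upper (P Q : V → V → Prop) (f : V × V) : Prop :=
  ∃ d, d ≠ f.1 ∧ d ≠ f.2 ∧ P f.1 d ∧ P f.2 d ∧ Q f.1 d ∧ Q f.2 d

/-- the pair `f` has a common neighbour below both ends in both orders -/
def Lower (P Q : V → V → Prop) (f : V × V) : Prop :=
  ∃ d, d ≠ f.1 ∧ d ≠ f.2 ∧ P d f.1 ∧ P d f.2 ∧ Q d f.1 ∧ Q d f.2

section Invariance

variable (hP : TransOrientation G P) (hQ : TransOrientation G Q)
include hP hQ

theorem up_inv {e₀ f g : V × V} (hflips : ∀ h, cls G P e₀ h → flipP P Q h)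
    (hg : gstep G P f g) (hgc : cls G P e₀ g) (hu : Upper P Q f) : Upper P Q g := by
  obtain ⟨hpf, hpg, hsh⟩ := hg
  obtain ⟨d, hd1, hd2, hP1, hP2, hQ1, hQ2⟩ := hu
  obtain ⟨hgne, hgp, hgq⟩ := hflips g hgc
  rcases hsh with ⟨h1, h2, h3⟩ | ⟨h1, h2, h3⟩
  · -- same source
    have hdg2 : d ≠ g.2 := by
      intro h
      have hq : Q g.2 f.1 := h1 ▸ hgq
      have : f.1 = d := TO.antisymm hQ hQ1 (h ▸ hq)
      exact hd1 this.symm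
    have hadj : G.Adj d g.2 := by
      by_contra hna
      have hstep : gstep G P (f.1, d) g := by
        refine ⟨⟨fun h => hd1 h.symm, hP1⟩, hpg, Or.inl ⟨h1, hdg2, hna⟩⟩
      have hcls : cls G P e₀ (f.1, d) :=
        Relation.EqvGen.trans _ _ _ hgc (Relation.EqvGen.rel _ _ (gstep_symm hstep))
      have := (hflips _ hcls).2.2
      exact hd1 (TO.antisymm hQ hQ1 this).symm
    have hadjf2 : G.Adj d f.2 := (TO.adj_of hP (fun h => hd2 h.symm) hP2).symm
    have hnon : nonAdj G f.2 g.2 := ⟨h2, h3⟩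
    have hstep1 := co_step_unif hP hnon
      (fun hc => hc.2 hadjf2.symm) (fun hc => hc.2 hadj.symm)
      (fun h => hd2 h.symm) (fun h => hdg2 h.symm)
    have hstep2 := co_step_unif hQ hnon
      (fun hc => hc.2 hadjf2.symm) (fun hc => hc.2 hadj.symm)
      (fun h => hd2 h.symm) (fun h => hdg2 h.symm)
    exact ⟨d, h1 ▸ hd1, hdg2, h1 ▸ hP1, hstep1.1.mp hP2, h1 ▸ hQ1, hstep2.1.mp hQ2⟩
  · -- same target
    have hdg1 : d ≠ g.1 := by
      intro h
      have hp : P g.1 f.2 := h1 ▸ hgp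
      have : f.2 = d := TO.antisymm hP hP2 (h ▸ hp)
      exact hd2 this.symm
    have hadj : G.Adj d g.1 := by
      have hp : P g.1 f.2 := h1 ▸ hgp
      have : P g.1 d := TO.trans hP hp hP2
      exact (TO.adj_of hP (fun h => hdg1 h.symm) this).symm
    have hadjf1 : G.Adj d f.1 := (TO.adj_of hP (fun h => hd1 h.symm) hP1).symm
    have hnon : nonAdj G f.1 g.1 := ⟨h2, h3⟩
    have hstep1 := co_step_unif hP hnon
      (fun hc => hc.2 hadjf1.symm) (fun hc => hc.2 hadj.symm)
      (fun h => hd1 h.symm) (fun h => hdg1 h.symm)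
    have hstep2 := co_step_unif hQ hnon
      (fun hc => hc.2 hadjf1.symm) (fun hc => hc.2 hadj.symm)
      (fun h => hd1 h.symm) (fun h => hdg1 h.symm)
    exact ⟨d, hdg1, h1 ▸ hd2, hstep1.1.mp hP1, h1 ▸ hP2, hstep2.1.mp hQ1, h1 ▸ hQ2⟩

theorem low_inv {e₀ f g : V × V} (hflips : ∀ h, cls G P e₀ h → flipP P Q h)
    (hg : gstep G P f g) (hgc : cls G P e₀ g) (hu : Lower P Q f) : Lower P Q g := by
  obtain ⟨hpf, hpg, hsh⟩ := hg
  obtain ⟨d, hd1, hd2, hP1, hP2, hQ1, hQ2⟩ := hu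
  obtain ⟨hgne, hgp, hgq⟩ := hflips g hgc
  rcases hsh with ⟨h1, h2, h3⟩ | ⟨h1, h2, h3⟩
  · -- same source
    have hdg2 : d ≠ g.2 := by
      intro h
      have hp : P f.1 d := h1 ▸ (h ▸ hgp)
      exact hd1 (TO.antisymm hP hP1 hp)
    have hadj : G.Adj d g.2 := by
      have hp : P f.1 g.2 := h1 ▸ hgp
      have : P d g.2 := TO.trans hP hP1 hp
      exact TO.adj_of hP hdg2 this
    have hadjf2 : G.Adj d f.2 := TO.adj_of hP hd2 hP2
    have hnon : nonAdj G f.2 g.2 := ⟨h2, h3⟩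
    have hstep1 := co_step_unif hP hnon
      (fun hc => hc.2 hadjf2.symm) (fun hc => hc.2 hadj.symm)
      (fun h => hd2 h.symm) (fun h => hdg2 h.symm)
    have hstep2 := co_step_unif hQ hnon
      (fun hc => hc.2 hadjf2.symm) (fun hc => hc.2 hadj.symm)
      (fun h => hd2 h.symm) (fun h => hdg2 h.symm)
    exact ⟨d, h1 ▸ hd1, hdg2, h1 ▸ hP1, hstep1.2.mp hP2, h1 ▸ hQ1, hstep2.2.mp hQ2⟩
  · -- same target
    have hdg1 : d ≠ g.1 := by
      intro h
      have hq : Q f.2 d := h1 ▸ (h ▸ hgq)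
      exact hd2 (TO.antisymm hQ hq hQ2).symm
    have hadj : G.Adj d g.1 := by
      by_contra hna
      have hstep : gstep G P (d, f.2) g := by
        refine ⟨⟨hd2, hP2⟩, hpg, Or.inr ⟨h1, hdg1, hna⟩⟩
      have hcls : cls G P e₀ (d, f.2) :=
        Relation.EqvGen.trans _ _ _ hgc (Relation.EqvGen.rel _ _ (gstep_symm hstep))
      have := (hflips _ hcls).2.2
      exact hd2 (TO.antisymm hQ hQ2 this)
    have hadjf1 : G.Adj d f.1 := TO.adj_of hP hd1 hP1
    have hnon : nonAdj G f.1 g.1 := ⟨h2, h3⟩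
    have hstep1 := co_step_unif hP hnon
      (fun hc => hc.2 hadjf1.symm) (fun hc => hc.2 hadj.symm)
      (fun h => hd1 h.symm) (fun h => hdg1 h.symm)
    have hstep2 := co_step_unif hQ hnon
      (fun hc => hc.2 hadjf1.symm) (fun hc => hc.2 hadj.symm)
      (fun h => hd1 h.symm) (fun h => hdg1 h.symm)
    exact ⟨d, hdg1, h1 ▸ hd2, hstep1.2.mp hP1, h1 ▸ hP2, hstep2.2.mp hQ1, h1 ▸ hQ2⟩

theorem ul_prop {e₀ : V × V} (hflips : ∀ h, cls G P e₀ h → flipP P Q h) :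
    ∀ f g : V × V, Relation.EqvGen (gstep G P) f g → cls G P e₀ f → cls G P e₀ g →
      ((Upper P Q f ↔ Upper P Q g) ∧ (Lower P Q f ↔ Lower P Q g)) := by
  intro f g h
  induction h with
  | rel a b hab =>
    intro ha hb
    exact ⟨⟨up_inv hP hQ hflips hab hb, up_inv hP hQ hflips (gstep_symm hab) ha⟩,
      ⟨low_inv hP hQ hflips hab hb, low_inv hP hQ hflips (gstep_symm hab) ha⟩⟩
  | refl a => intro _ _; exact ⟨Iff.rfl, Iff.rfl⟩
  | symm a b h ih =>
    intro hb ha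
    have := ih ha hb
    exact ⟨this.1.symm, this.2.symm⟩
  | trans a b c hab hbc ih1 ih2 =>
    intro ha hc
    have hb : cls G P e₀ b := Relation.EqvGen.trans _ _ _ ha hab
    have t1 := ih1 ha hb
    have t2 := ih2 hb hc
    exact ⟨t1.1.trans t2.1, t1.2.trans t2.2⟩

theorem core [Finite V] {e₀ : V × V} (hspan : VK G P e₀ = Set.univ)
    (hflip0 : flipP P Q e₀) (e₁ : V × V) (hmem : cls G P e₀ e₁) (d : V)
    (hc1 : agree2 P Q d e₁.1 ∨ agree2 P Q e₁.1 d)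
    (hc2 : agree2 P Q d e₁.2 ∨ agree2 P Q e₁.2 d) : False := by
  have hflips : ∀ h, cls G P e₀ h → flipP P Q h := fun h hc => cls_flip hP hQ hc hflip0
  obtain ⟨hne1, hp1, hq1⟩ := hflips e₁ hmem
  haveI : Nonempty V := ⟨e₀.1⟩
  -- dichotomy
  have hdich : Upper P Q e₁ ∨ Lower P Q e₁ := by
    rcases hc1 with ⟨ha1, ha2, ha3⟩ | ⟨ha1, ha2, ha3⟩ <;>
      rcases hc2 with ⟨hb1, hb2, hb3⟩ | ⟨hb1, hb2, hb3⟩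
    · exact Or.inr ⟨d, ha1, hb1, ha2, hb2, ha3, hb3⟩
    · -- d below e₁.1, above e₁.2 : P e₁.2 d and P d e₁.1 gives P e₁.2 e₁.1
      exfalso
      have : P e₁.2 e₁.1 := TO.trans hP hb2 ha2
      exact hne1 (TO.antisymm hP hp1 this)
    · -- d above e₁.1, below e₁.2 : Q e₁.1 d and Q d e₁.2 gives Q e₁.1 e₁.2
      exfalso
      have : Q e₁.1 e₁.2 := TO.trans hQ ha3 hb3
      exact hne1 (TO.antisymm hQ this hq1)
    · exact Or.inl ⟨d, fun h => ha1 h.symm, fun h => hb1 h.symm, ha2, hb2, ha3, hb3⟩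
  rcases hdich with hup | hlow
  · obtain ⟨m, hm⟩ := exists_P_max hP (G := G)
    have hmVK : m ∈ VK G P e₀ := hspan ▸ Set.mem_univ m
    obtain ⟨f, hf, hend⟩ := hmVK
    obtain ⟨hfne, hfp, hfq⟩ := hflips f hf
    rcases hend with hend | hend
    · rw [← hend] at hfp
      exact hfne (hend.symm.trans (hm f.2 hfp).symm)
    · have hUf : Upper P Q f :=
        (ul_prop hP hQ hflips e₁ f (cls_symm_mem hmem hf) hmem hf).1.mp hup
      obtain ⟨d', hd1, hd2, _, hPf2, _, _⟩ := hUf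
      rw [← hend] at hPf2
      exact hd2 ((hm d' hPf2).trans hend)
  · obtain ⟨m, hm⟩ := exists_P_min hP (G := G)
    have hmVK : m ∈ VK G P e₀ := hspan ▸ Set.mem_univ m
    obtain ⟨f, hf, hend⟩ := hmVK
    obtain ⟨hfne, hfp, hfq⟩ := hflips f hf
    rcases hend with hend | hend
    · have hLf : Lower P Q f :=
        (ul_prop hP hQ hflips e₁ f (cls_symm_mem hmem hf) hmem hf).2.mp hlow
      obtain ⟨d', hd1, hd2, hPd1, _, _, _⟩ := hLf
      rw [← hend] at hPd1
      exact hd1 ((hm d' hPd1).trans hend)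
    · rw [← hend] at hfp
      exact hfne ((hm f.1 hfp).trans hend)

end Invariance



/-! ### Lemma K : the three connectivities are contradictory -/

theorem lemK [Finite V] (hP : TransOrientation G P) (hQ : TransOrientation G Q)
    (hFconn : ∀ x y : V, Relation.EqvGen (flipAdj P Q) x y)
    (hBconn : ∀ x y : V, Relation.EqvGen (flipAdj P (fun a b => Q b a)) x y)
    (hCo : ∀ x y : V, Relation.EqvGen (nonAdj G) x y)
    {x₀ y₀ : V} (hxy₀ : x₀ ≠ y₀) : False := by
  have hQ' : TransOrientation G (fun a b => Q b a) := TO.swap hQ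
  have hy₀ : y₀ ∉ ({x₀} : Set V) := by
    simp only [Set.mem_singleton_iff]
    exact fun h => hxy₀ h.symm
  have hexF : ∃ a b : V, flip2 P Q a b := by
    obtain ⟨u, v, huv, -, -⟩ :=
      (eqvgen_cross flipAdj_symm' (hFconn x₀ y₀) {x₀}).1 rfl hy₀
    rcases huv with h | h
    · exact ⟨u, v, h⟩
    · exact ⟨v, u, h⟩
  have hexB : ∃ a b : V, flip2 P (fun a b => Q b a) a b := by
    obtain ⟨u, v, huv, -, -⟩ :=
      (eqvgen_cross flipAdj_symm' (hBconn x₀ y₀) {x₀}).1 rfl hy₀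
    rcases huv with h | h
    · exact ⟨u, v, h⟩
    · exact ⟨v, u, h⟩
  obtain ⟨ef, hef, hefspan⟩ := exists_spanning hP hQ hFconn hCo hexF
  obtain ⟨ea, hea, heaspan⟩ := exists_spanning hP hQ' hBconn hCo hexB
  obtain ⟨hne_ab, hPab, hQab⟩ := hea
  have haVK : ea.1 ∈ VK G P ef := hefspan ▸ Set.mem_univ _
  obtain ⟨f₁, hclf₁, hend⟩ := haVK
  obtain ⟨hf₁ne, hf₁p, hf₁q⟩ := cls_flip hP hQ hclf₁ hef
  have hclea : cls G P ea ea := Relation.EqvGen.refl _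
  rcases hend with ha | ha
  · -- ea.1 = f₁.1 ; set c := f₁.2, flipped pair (ea.1, c)
    have hPac : P ea.1 f₁.2 := by rw [ha]; exact hf₁p
    have hQca : Q f₁.2 ea.1 := by rw [ha]; exact hf₁q
    have hac : ea.1 ≠ f₁.2 := by rw [ha]; exact hf₁ne
    have hbc : ea.2 ≠ f₁.2 := by
      intro h
      rw [← h] at hQca
      exact hne_ab (TO.antisymm hQ hQab hQca)
    have hadjbc : G.Adj ea.2 f₁.2 := by
      by_contra hna
      have hstep : gstep G P f₁ (ea.1, ea.2) :=
        ⟨⟨hf₁ne, hf₁p⟩, ⟨hne_ab, hPab⟩,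
          Or.inl ⟨ha.symm, fun h => hbc h.symm, fun h => hna h.symm⟩⟩
      have hcl2 : cls G P ef (ea.1, ea.2) :=
        Relation.EqvGen.trans _ _ _ hclf₁ (Relation.EqvGen.rel _ _ hstep)
      have := (cls_flip hP hQ hcl2 hef).2.2
      exact hne_ab (TO.antisymm hQ hQab this)
    rcases (TO.adj_iff hP hbc).1 hadjbc with hp | hp <;>
      rcases (TO.adj_iff hQ hbc).1 hadjbc with hq | hq
    · -- agree2 ea.2 f₁.2 : use core for (P, Q) at f₁ with companion ea.2
      refine core hP hQ hefspan hef f₁ hclf₁ ea.2 (Or.inr ?_) (Or.inl ?_)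
      · rw [← ha]; exact ⟨hne_ab, hPab, hQab⟩
      · exact ⟨hbc, hp, hq⟩
    · -- flip2 ea.2 f₁.2 : use core for (P, swap Q) at ea with companion f₁.2
      refine core hP hQ' heaspan ⟨hne_ab, hPab, hQab⟩ ea hclea f₁.2
        (Or.inr ⟨hac, hPac, hQca⟩) (Or.inr ⟨hbc, hp, hq⟩)
    · -- flip2 f₁.2 ea.2
      refine core hP hQ' heaspan ⟨hne_ab, hPab, hQab⟩ ea hclea f₁.2
        (Or.inr ⟨hac, hPac, hQca⟩) (Or.inl ⟨fun h => hbc h.symm, hp, hq⟩)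
    · -- agree2 f₁.2 ea.2
      refine core hP hQ hefspan hef f₁ hclf₁ ea.2 (Or.inr ?_)
        (Or.inr ⟨fun h => hbc h.symm, hp, hq⟩)
      rw [← ha]; exact ⟨hne_ab, hPab, hQab⟩
  · -- ea.1 = f₁.2 ; set c := f₁.1, flipped pair (c, ea.1)
    have hPca : P f₁.1 ea.1 := by rw [ha]; exact hf₁p
    have hQac : Q ea.1 f₁.1 := by rw [ha]; exact hf₁q
    have hca : f₁.1 ≠ ea.1 := by rw [ha]; exact hf₁ne
    have hbc : ea.2 ≠ f₁.1 := by
      intro h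
      rw [← h] at hPca
      exact hne_ab (TO.antisymm hP hPab hPca)
    have hadjbc : G.Adj ea.2 f₁.1 := by
      have : P f₁.1 ea.2 := TO.trans hP hPca hPab
      exact (TO.adj_of hP (fun h => hbc h.symm) this).symm
    rcases (TO.adj_iff hP hbc).1 hadjbc with hp | hp <;>
      rcases (TO.adj_iff hQ hbc).1 hadjbc with hq | hq
    · -- agree2 ea.2 f₁.1
      refine core hP hQ hefspan hef f₁ hclf₁ ea.2 (Or.inl ⟨hbc, hp, hq⟩) (Or.inr ?_)
      rw [← ha]; exact ⟨hne_ab, hPab, hQab⟩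
    · -- flip2 ea.2 f₁.1
      refine core hP hQ' heaspan ⟨hne_ab, hPab, hQab⟩ ea hclea f₁.1
        (Or.inl ⟨hca, hPca, hQac⟩) (Or.inr ⟨hbc, hp, hq⟩)
    · -- flip2 f₁.1 ea.2
      refine core hP hQ' heaspan ⟨hne_ab, hPab, hQab⟩ ea hclea f₁.1
        (Or.inl ⟨hca, hPca, hQac⟩) (Or.inl ⟨fun h => hbc h.symm, hp, hq⟩)
    · -- agree2 f₁.1 ea.2
      refine core hP hQ hefspan hef f₁ hclf₁ ea.2
        (Or.inr ⟨fun h => hbc h.symm, hp, hq⟩) (Or.inr ?_)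
      rw [← ha]; exact ⟨hne_ab, hPab, hQab⟩



/-! ### The finite case of the main theorem -/

theorem finMain : ∀ (N : ℕ) (W : Type u) (Gw : SimpleGraph W) (Pw Qw : W → W → Prop),
    ∀ [Fintype W], Fintype.card W ≤ N → TransOrientation Gw Pw → TransOrientation Gw Qw →
    NDimRel n Pw → NDimRel n Qw := by
  intro N
  induction N with
  | zero =>
    intro W Gw Pw Qw _ hcard hP hQ _
    have : Fintype.card W ≤ 1 := le_trans hcard (by norm_num)
    exact NDim.of_subsingleton (Fintype.card_le_one_iff_subsingleton.1 this) (TO.rfl hQ)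
  | succ N ih =>
    intro W Gw Pw Qw _ hcard hP hQ hdim
    classical
    by_cases hsmall : Fintype.card W ≤ 1
    · exact NDim.of_subsingleton (Fintype.card_le_one_iff_subsingleton.1 hsmall) (TO.rfl hQ)
    · obtain ⟨x₀, y₀, hxy₀⟩ := Fintype.one_lt_card_iff_nontrivial.1
        (show 1 < Fintype.card W by omega)
      -- helper: the recursive call on a proper class of an equivalence
      have IH : ∀ (p : W → Prop) (x : W), ¬ p x →
          TransOrientation (Gw.comap (Subtype.val : {y // p y} → W))
            (fun a b : {y // p y} => Qw a.1 b.1) →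
          NDimRel n (fun a b : {y // p y} => Pw a.1 b.1) →
          NDimRel n (fun a b : {y // p y} => Qw a.1 b.1) := by
        intro p x hx hQ' hdim'
        have hlt : Fintype.card {y // p y} < Fintype.card W := Fintype.card_subtype_lt hx
        exact ih {y // p y} (Gw.comap Subtype.val) _ _ (by omega)
          (TO.restrict hP p) hQ' hdim'
      -- find proper classes from a witness of disconnectivity
      have findz : ∀ (r : W → W → Prop), (∃ u w, ¬ Relation.EqvGen r u w) →
          ∀ x, ∃ z, ¬ Relation.EqvGen r x z := by
        intro r ⟨u, w, huw⟩ x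
        by_cases hxu : Relation.EqvGen r x u
        · refine ⟨w, fun hxw => huw ?_⟩
          exact Relation.EqvGen.trans _ _ _ (Relation.EqvGen.symm _ _ hxu) hxw
        · exact ⟨u, hxu⟩
      by_cases h1 : ∃ u w, ¬ Relation.EqvGen (flipAdj Pw Qw) u w
      · refine glue_flip hP hQ hdim (fun x => ?_)
        obtain ⟨z, hz⟩ := findz _ h1 x
        exact IH _ z hz (TO.restrict hQ _) (NDim.restrict hdim _)
      by_cases h2 : ∃ u w, ¬ Relation.EqvGen (flipAdj Pw (fun a b => Qw b a)) u w
      · have hQop : TransOrientation Gw (fun a b => Qw b a) := TO.swap hQ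
        have hres : NDimRel n (fun a b => (fun a b => Qw b a) a b) := by
          refine glue_flip hP hQop hdim (fun x => ?_)
          obtain ⟨z, hz⟩ := findz _ h2 x
          have hQ'res : NDimRel n
              (fun a b : {y // Relation.EqvGen (flipAdj Pw fun a b => Qw b a) x y} =>
                Qw a.1 b.1) :=
            IH _ z hz (TO.restrict hQ _) (NDim.restrict hdim _)
          exact NDim.swap hQ'res
        exact NDim.swap hres
      by_cases h3 : ∃ u w, ¬ Relation.EqvGen (nonAdj Gw) u w
      · have hn : n ≠ 0 := by
          intro hn0
          subst hn0
          have := subsingleton_of_ndim_zero hP hdim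
          exact hxy₀ (this.elim x₀ y₀)
        refine glue_co hQ hn (fun x => ?_)
        obtain ⟨z, hz⟩ := findz _ h3 x
        exact IH _ z hz (TO.restrict hQ _) (NDim.restrict hdim _)
      push_neg at h1 h2 h3
      exact absurd hxy₀ (fun _ => lemK hP hQ h1 h2 h3 hxy₀)



/-! ### Compactness: from finite subsets to the full vertex set -/

section Compactness

open CategoryTheory

variable (n : ℕ) (Q : V → V → Prop)

/-- a realizer of `Q` on the finite subset `S` -/
def GoodRlz (S : Finset V) (L : Fin n → (↥S → ↥S → Prop)) : Prop :=
  (∀ i a, L i a a) ∧ (∀ i a b c, L i a b → L i b c → L i a c) ∧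
  (∀ i a b, L i a b → L i b a → a = b) ∧ (∀ i a b, L i a b ∨ L i b a) ∧
  (∀ a b : ↥S, Q a.1 b.1 ↔ ∀ i, L i a b)

theorem GoodRlz_restrict {S T : Finset V} (hTS : T ≤ S) {L : Fin n → (↥S → ↥S → Prop)}
    (h : GoodRlz n Q S L) :
    GoodRlz n Q T (fun i a b => L i ⟨a.1, hTS a.2⟩ ⟨b.1, hTS b.2⟩) := by
  obtain ⟨h1, h2, h3, h4, h5⟩ := h
  refine ⟨fun i a => h1 i _, fun i a b c hab hbc => h2 i _ _ _ hab hbc,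
    fun i a b hab hba => ?_, fun i a b => h4 i _ _, fun a b => h5 ⟨a.1, hTS a.2⟩ ⟨b.1, hTS b.2⟩⟩
  have h6 := h3 i _ _ hab hba
  have h7 : a.1 = b.1 := congrArg (Subtype.val : {x // x ∈ S} → V) h6
  exact Subtype.ext h7

/-- the inverse system of realizer spaces -/
def RlzF : (Finset V)ᵒᵖ ⥤ Type u where
  obj S := {L : Fin n → (↥S.unop → ↥S.unop → Prop) // GoodRlz n Q S.unop L}
  map {S T} f := TypeCat.ofHom fun L => ⟨fun i a b => L.1 i ⟨a.1, leOfHom f.unop a.2⟩ ⟨b.1, leOfHom f.unop b.2⟩,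
    GoodRlz_restrict n Q (leOfHom f.unop) L.2⟩

end Compactness



open CategoryTheory in
theorem mainAux {V : Type u} (G : SimpleGraph V) (n : ℕ) (le₁ : V → V → Prop)
    (h₁ : TransOrientation G le₁) (hdim : NDimRel n le₁) (le₂ : V → V → Prop)
    (h₂ : TransOrientation G le₂) : NDimRel n le₂ := by
  classical
  haveI hFin : ∀ S : (Finset V)ᵒᵖ, Finite ((RlzF n le₂).obj S) := fun S =>
    inferInstanceAs (Finite
      {L : Fin n → (↥S.unop → ↥S.unop → Prop) // GoodRlz n le₂ S.unop L})
  haveI hNe : ∀ S : (Finset V)ᵒᵖ, Nonempty ((RlzF n le₂).obj S) := by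
    intro S
    have hP' := TO.restrict h₁ (fun x => x ∈ S.unop)
    have hQ' := TO.restrict h₂ (fun x => x ∈ S.unop)
    have hdim' := NDim.restrict hdim (fun x => x ∈ S.unop)
    obtain ⟨L, hL, hI⟩ := finMain (n := n) (Fintype.card {x // x ∈ S.unop})
      {x // x ∈ S.unop} (G.comap Subtype.val) _ _ le_rfl hP' hQ' hdim'
    exact ⟨⟨L, fun i a => (hL i).refl a, fun i a b c hab hbc => (hL i).trans _ _ _ hab hbc,
      fun i a b hab hba => (hL i).antisymm _ _ hab hba, fun i a b => (hL i).total a b,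
      fun a b => hI a b⟩⟩
  obtain ⟨u, hu⟩ := nonempty_sections_of_finite_inverse_system (RlzF n le₂)
  have compat : ∀ (S T : Finset V) (hST : S ≤ T) (i : Fin n) (a b : ↥S),
      ((u (Opposite.op S)).1 i a b ↔
        (u (Opposite.op T)).1 i ⟨a.1, hST a.2⟩ ⟨b.1, hST b.2⟩) := by
    intro S T hST i a b
    have hmap := hu (f := (homOfLE hST).op)
    rw [← hmap]
    exact Iff.rfl
  have hmm : ∀ x y : V, x ∈ ({x, y} : Finset V) := fun x y => Finset.mem_insert_self _ _
  have hmm2 : ∀ x y : V, y ∈ ({x, y} : Finset V) := fun x y => by simp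
  refine ⟨fun i x y => (u (Opposite.op ({x, y} : Finset V))).1 i ⟨x, hmm x y⟩ ⟨y, hmm2 x y⟩,
    fun i => ?_, fun x y => ?_⟩
  · refine mkLin ?_ ?_ ?_ ?_
    · intro x
      exact (u (Opposite.op ({x, x} : Finset V))).2.1 i _
    · intro x y z hxy hyz
      set T : Finset V := {x, y, z} with hT
      have s1 : ({x, y} : Finset V) ≤ T := by
        intro w hw
        simp only [hT, Finset.mem_insert, Finset.mem_singleton] at hw ⊢
        tauto
      have s2 : ({y, z} : Finset V) ≤ T := by
        intro w hw
        simp only [hT, Finset.mem_insert, Finset.mem_singleton] at hw ⊢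
        tauto
      have s3 : ({x, z} : Finset V) ≤ T := by
        intro w hw
        simp only [hT, Finset.mem_insert, Finset.mem_singleton] at hw ⊢
        tauto
      have t1 := (compat {x, y} T s1 i ⟨x, hmm x y⟩ ⟨y, hmm2 x y⟩).1 hxy
      have t2 := (compat {y, z} T s2 i ⟨y, hmm y z⟩ ⟨z, hmm2 y z⟩).1 hyz
      have t3 := (u (Opposite.op T)).2.2.1 i _ _ _ t1 t2
      exact (compat {x, z} T s3 i ⟨x, hmm x z⟩ ⟨z, hmm2 x z⟩).2 t3
    · intro x y hxy hyx
      have h1 := hxy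
      have h2' : (u (Opposite.op ({x, y} : Finset V))).1 i ⟨y, hmm2 x y⟩ ⟨x, hmm x y⟩ := by
        have s0 : ({y, x} : Finset V) ≤ {x, y} := by
          intro w hw
          simp only [Finset.mem_insert, Finset.mem_singleton] at hw ⊢
          tauto
        have := (compat {y, x} {x, y} s0 i ⟨y, hmm y x⟩ ⟨x, hmm2 y x⟩).1 hyx
        exact this
      have := (u (Opposite.op ({x, y} : Finset V))).2.2.2.1 i _ _ h1 h2'
      exact congrArg (Subtype.val : {w // w ∈ ({x, y} : Finset V)} → V) this
    · intro x y
      rcases (u (Opposite.op ({x, y} : Finset V))).2.2.2.2.1 i ⟨x, hmm x y⟩ ⟨y, hmm2 x y⟩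
        with h | h
      · exact Or.inl h
      · right
        have s0 : ({y, x} : Finset V) ≤ {x, y} := by
          intro w hw
          simp only [Finset.mem_insert, Finset.mem_singleton] at hw ⊢
          tauto
        exact (compat {y, x} {x, y} s0 i ⟨y, hmm y x⟩ ⟨x, hmm2 y x⟩).2 h
  · exact (u (Opposite.op ({x, y} : Finset V))).2.2.2.2.2 ⟨x, hmm x y⟩ ⟨y, hmm2 x y⟩

end TMS

/-- Trotter–Moore–Sumner: if a graph has an `n`-dimensional transitive orientation,
then every transitive orientation of it is `n`-dimensional. -/
theorem trotter_moore_sumner {V : Type u} (G : SimpleGraph V) (n : ℕ)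
    (le₁ : V → V → Prop) (h₁ : TransOrientation G le₁) (hdim : NDimRel n le₁) :
    ∀ le₂ : V → V → Prop, TransOrientation G le₂ → NDimRel n le₂ :=
  fun le₂ h₂ => TMS.mainAux G n le₁ h₁ hdim le₂ h₂
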